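/- Let X1,...,Xn be iid bounded random variables under ℙ, each distributed as X. Then MINVAR(X) = E^ℙ[max{X1,...,Xn}] equals the Choquet integral of X with respect to the submodular standard set function c(A) = 1 - (1 - ℙ(A))^n; in particular, MINVAR is a coherent, comonotonic-additive risk measure. -/

import Mathlib

open MeasureTheory Set

noncomputable def choquet {Ω : Type*} (c : Set Ω → ℝ) (X : Ω → ℝ) : ℝ :=
  (∫ x in Set.Iio (0 : ℝ), (c {ω | x < X ω} - 1)) + ∫ x in Set.Ioi (0 : ℝ), c {ω | x < X ω}

def Comonotonic {Ω : Type*} (X Y : Ω → ℝ) : Prop :=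
  ∀ ω ω', 0 ≤ (X ω - X ω') * (Y ω - Y ω')

def BddRV {Ω : Type*} (X : Ω → ℝ) : Prop := ∃ M, ∀ ω, |X ω| ≤ M

/-- MINVAR: the expectation, under the product of `n` copies of `P`, of the maximum of
the `n` iid coordinate copies of `X`. -/
noncomputable def MINVAR {Ω : Type*} [MeasurableSpace Ω] (P : Measure Ω) (n : ℕ)
    (X : Ω → ℝ) : ℝ :=
  ∫ ω, (⨆ i : Fin n, X (ω i)) ∂(Measure.pi fun _ : Fin n => P)

section Helpers

variable {Ω : Type*} [MeasurableSpace Ω]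

lemma ciSup_of_max {ι : Type*} [Finite ι] [Nonempty ι] (f : ι → ℝ) {i0 : ι}
    (h : ∀ j, f j ≤ f i0) : ⨆ i, f i = f i0 :=
  le_antisymm (ciSup_le h) (le_ciSup (Set.finite_range f).bddAbove i0)

lemma sup_abs_bound {n : ℕ} [Nonempty (Fin n)] (f : Fin n → ℝ) (M : ℝ)
    (hb : ∀ i, |f i| ≤ M) : |⨆ i, f i| ≤ M := by
  obtain ⟨i0, h0⟩ := Finite.exists_max f
  rw [ciSup_of_max f h0]
  exact hb i0

lemma meas_sup {n : ℕ} {X : Ω → ℝ} (hX : Measurable X) :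
    Measurable (fun ω : Fin n → Ω => ⨆ i : Fin n, X (ω i)) :=
  Measurable.iSup fun i => hX.comp (measurable_pi_apply i)

lemma integrable_sup {n : ℕ} [Nonempty (Fin n)] {X : Ω → ℝ} (hX : Measurable X)
    {M : ℝ} (hb : ∀ ω, |X ω| ≤ M) (Q : Measure (Fin n → Ω)) [IsProbabilityMeasure Q] :
    Integrable (fun ω : Fin n → Ω => ⨆ i : Fin n, X (ω i)) Q := by
  refine (integrable_const M).mono' (meas_sup hX).aestronglyMeasurable (ae_of_all _ fun ω => ?_)
  simpa using sup_abs_bound (fun i => X (ω i)) M (fun i => hb (ω i))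

/-- tail probability of the sup of iid coordinates -/
lemma tail_sup {n : ℕ} (hn : 0 < n) (P : Measure Ω) [IsProbabilityMeasure P]
    {X : Ω → ℝ} (hX : Measurable X) (t : ℝ) :
    ((Measure.pi fun _ : Fin n => P) {ω | t < ⨆ i : Fin n, X (ω i)}).toReal
      = 1 - (1 - (P {ω | t < X ω}).toReal) ^ n := by
  haveI : Nonempty (Fin n) := Fin.pos_iff_nonempty.mp hn
  set Q := Measure.pi fun _ : Fin n => P with hQ
  have key : ∀ ω : Fin n → Ω, (⨆ i, X (ω i)) ≤ t ↔
      ω ∈ univ.pi fun _ : Fin n => {x | t < X x}ᶜ := fun ω => by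
    simp only [mem_pi, mem_univ, forall_true_left, mem_compl_iff, mem_setOf_eq, not_lt]
    exact ⟨fun h i => le_trans (le_ciSup (f := fun j => X (ω j)) (Set.finite_range _).bddAbove i) h,
      fun h => ciSup_le h⟩
  have hset : {ω : Fin n → Ω | t < ⨆ i : Fin n, X (ω i)}
      = (univ.pi fun _ : Fin n => {x | t < X x}ᶜ)ᶜ := by
    ext ω
    rw [mem_compl_iff, mem_setOf_eq, ← key, not_le]
  have hmeas : MeasurableSet ({x : Ω | t < X x}ᶜ) := ((hX measurableSet_Ioi : MeasurableSet {x : Ω | t < X x})).compl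
  have hpi : Q (univ.pi fun _ : Fin n => {x | t < X x}ᶜ) = (P ({x | t < X x}ᶜ)) ^ n := by
    rw [hQ, Measure.pi_pi]
    simp [Finset.prod_const]
  have hms : MeasurableSet {x : Ω | t < X x} := hX measurableSet_Ioi
  have hPc : (P ({x | t < X x}ᶜ)).toReal = 1 - (P {x | t < X x}).toReal := by
    rw [prob_compl_eq_one_sub hms]
    rw [ENNReal.toReal_sub_of_le prob_le_one ENNReal.one_ne_top]
    simp
  rw [hset, prob_compl_eq_one_sub (MeasurableSet.univ_pi fun _ => hmeas),
    ENNReal.toReal_sub_of_le prob_le_one ENNReal.one_ne_top, hpi, ENNReal.toReal_pow, hPc]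
  simp

lemma convex_ineq {n : ℕ} {x y s t : ℝ} (hx : 0 ≤ x) (hxs : x ≤ s) (hsy : s ≤ y)
    (hsum : x + y = s + t) : s ^ n + t ^ n ≤ x ^ n + y ^ n := by
  have hxy : x ≤ y := hxs.trans hsy
  rcases hxy.lt_or_eq with hlt | heq
  case inr =>
    have hs : s = x := le_antisymm (by linarith) hxs
    have ht : t = x := by linarith
    rw [hs, ht, ← heq]
  case inl =>
    set l := (y - s) / (y - x) with hl
    have hyx : 0 < y - x := by linarith
    have hl0 : 0 ≤ l := div_nonneg (by linarith) hyx.le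
    have hl1 : l ≤ 1 := (div_le_one hyx).mpr (by linarith)
    have hcv : ConvexOn ℝ (Ici (0:ℝ)) (fun z : ℝ => z ^ n) := convexOn_pow n
    have hxI : x ∈ Ici (0:ℝ) := hx
    have hyI : y ∈ Ici (0:ℝ) := le_trans hx (by linarith)
    have hs_eq : s = l * x + (1 - l) * y := by
      field_simp [hl]
      have h' : l * (y - x) = y - s := by rw [hl]; exact div_mul_cancel₀ _ hyx.ne'
      linear_combination h'
    have ht_eq : t = (1 - l) * x + l * y := by
      have : t = x + y - s := by linarith
      rw [this, hs_eq]; ring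
    have h1 := hcv.2 hxI hyI hl0 (by linarith : (0:ℝ) ≤ 1 - l) (by ring)
    have h2 := hcv.2 hxI hyI (by linarith : (0:ℝ) ≤ 1 - l) hl0 (by ring)
    simp only [smul_eq_mul] at h1 h2
    rw [hs_eq, ht_eq]
    nlinarith [h1, h2]

lemma layercake_bdd {α : Type*} [MeasurableSpace α] (μ : Measure α) [IsProbabilityMeasure μ]
    (Z : α → ℝ) (hZ : Measurable Z) (M : ℝ) (hM : 0 ≤ M) (hb : ∀ a, |Z a| ≤ M) :
    ∫ a, Z a ∂μ = (∫ t in Iio (0:ℝ), ((μ {a | t < Z a}).toReal - 1))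
      + ∫ t in Ioi (0:ℝ), (μ {a | t < Z a}).toReal := by
  set G : ℝ → ℝ := fun t => (μ {a | t < Z a}).toReal with hG
  have hGanti : Antitone G := fun s t hst =>
    ENNReal.toReal_mono (measure_ne_top _ _)
      (measure_mono (fun a ha => lt_of_le_of_lt hst ha))
  have hGint : ∀ a b : ℝ, IntervalIntegrable G volume a b := fun a b =>
    hGanti.intervalIntegrable
  have hG0 : ∀ t, M ≤ t → G t = 0 := by
    intro t ht
    have : {a | t < Z a} = (∅ : Set α) := by
      ext a; simp only [mem_setOf_eq, mem_empty_iff_false, iff_false, not_lt]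
      exact le_trans (le_trans (le_abs_self _) (hb a)) ht
    simp [hG, this]
  have hG1 : ∀ t, t < -M → G t = 1 := by
    intro t ht
    have : {a | t < Z a} = (univ : Set α) := by
      ext a; simp only [mem_setOf_eq, mem_univ, iff_true]
      exact lt_of_lt_of_le ht (neg_le_of_abs_le (hb a))
    simp [hG, this]
  have hZint : Integrable Z μ := by
    refine (integrable_const M).mono' hZ.aestronglyMeasurable (ae_of_all _ ?_)
    intro a; simpa using hb a
  have hnn : 0 ≤ᵐ[μ] fun a => Z a + M := ae_of_all _ fun a => by
    simp only [Pi.zero_apply]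
    have := neg_le_of_abs_le (hb a); linarith
  have hint2 : Integrable (fun a => Z a + M) μ := hZint.add (integrable_const M)
  have key := hint2.integral_eq_integral_meas_lt hnn
  have hset : ∀ t : ℝ, {a | t < Z a + M} = {a | t - M < Z a} := by
    intro t; ext a; simp [sub_lt_iff_lt_add]
  have e1 : ∫ a, (Z a + M) ∂μ = ∫ a, Z a ∂μ + M := by
    rw [integral_add hZint (integrable_const M), MeasureTheory.integral_const]; simp
  have key2 : ∫ a, Z a ∂μ + M = ∫ t in Ioi (0:ℝ), G (t - M) := by
    rw [← e1, key]
    refine integral_congr_ae (ae_of_all _ fun t => ?_)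
    exact congrArg ENNReal.toReal (congrArg μ (hset t))
  have trunc : ∫ t in Ioi (0:ℝ), G (t - M) = ∫ t in Ioc (0:ℝ) (2*M), G (t - M) := by
    refine setIntegral_eq_of_subset_of_ae_diff_eq_zero nullMeasurableSet_Ioi
      Ioc_subset_Ioi_self (ae_of_all _ fun t ht => ?_)
    rcases ht with ⟨ht1, ht2⟩
    have h2M : 2*M < t := by
      by_contra h
      exact ht2 ⟨ht1, not_lt.mp h⟩
    exact hG0 (t - M) (by linarith)
  have trunc2 : ∫ t in Ioi (0:ℝ), G t = ∫ t in Ioc (0:ℝ) M, G t := by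
    refine setIntegral_eq_of_subset_of_ae_diff_eq_zero nullMeasurableSet_Ioi
      Ioc_subset_Ioi_self (ae_of_all _ fun t ht => ?_)
    rcases ht with ⟨ht1, ht2⟩
    have : M < t := by
      by_contra h
      exact ht2 ⟨ht1, not_lt.mp h⟩
    exact hG0 t this.le
  have truncneg : ∫ t in Iio (0:ℝ), (G t - 1) = ∫ t in Ico (-M) (0:ℝ), (G t - 1) := by
    refine setIntegral_eq_of_subset_of_ae_diff_eq_zero nullMeasurableSet_Iio
      Ico_subset_Iio_self (ae_of_all _ fun t ht => ?_)
    rcases ht with ⟨ht1, ht2⟩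
    have : t < -M := by
      by_contra h
      exact ht2 ⟨not_lt.mp h, ht1⟩
    rw [hG1 t this]; ring
  have i1 : ∫ t in Ioc (0:ℝ) (2*M), G (t - M) = ∫ t in (-M)..M, G t := by
    rw [← intervalIntegral.integral_of_le (by linarith),
      intervalIntegral.integral_comp_sub_right G M]
    congr 1 <;> ring
  have i2 : ∫ t in Ioc (0:ℝ) M, G t = ∫ t in (0:ℝ)..M, G t := by
    rw [intervalIntegral.integral_of_le hM]
  have i3 : ∫ t in Ico (-M) (0:ℝ), (G t - 1) = ∫ t in (-M)..(0:ℝ), (G t - 1) := by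
    rw [intervalIntegral.integral_of_le (by linarith), MeasureTheory.integral_Ico_eq_integral_Ioo, ← MeasureTheory.integral_Ioc_eq_integral_Ioo]
  have i4 : ∫ t in (-M)..(0:ℝ), (G t - 1) = (∫ t in (-M)..(0:ℝ), G t) - M := by
    rw [intervalIntegral.integral_sub (hGint _ _) intervalIntegrable_const,
      intervalIntegral.integral_const]
    simp
  have split : ∫ t in (-M)..M, G t = (∫ t in (-M)..(0:ℝ), G t) + ∫ t in (0:ℝ)..M, G t :=
    (intervalIntegral.integral_add_adjacent_intervals (hGint _ _) (hGint _ _)).symm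
  rw [truncneg, i3, i4, trunc2, i2]
  have := key2
  rw [trunc, i1, split] at this
  linarith

end Helpers

theorem minvar_choquet_coherent_comonotonic_additive {Ω : Type*} [MeasurableSpace Ω]
    (P : Measure Ω) [IsProbabilityMeasure P] (n : ℕ) (hn : 0 < n) :
    (∀ X : Ω → ℝ, Measurable X → BddRV X →
        MINVAR P n X = choquet (fun A => 1 - (1 - (P A).toReal) ^ n) X) ∧
    (∀ A B : Set Ω, MeasurableSet A → MeasurableSet B →
        (1 - (1 - (P (A ∪ B)).toReal) ^ n) + (1 - (1 - (P (A ∩ B)).toReal) ^ n)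
          ≤ (1 - (1 - (P A).toReal) ^ n) + (1 - (1 - (P B).toReal) ^ n)) ∧
    (∀ X : Ω → ℝ, Measurable X → BddRV X → ∀ c : ℝ,
        MINVAR P n (fun ω => X ω + c) = MINVAR P n X + c) ∧
    (∀ X Y : Ω → ℝ, Measurable X → Measurable Y → BddRV X → BddRV Y →
        (∀ ω, X ω ≤ Y ω) → MINVAR P n X ≤ MINVAR P n Y) ∧
    (∀ X : Ω → ℝ, Measurable X → BddRV X → ∀ l : ℝ, 0 < l →
        MINVAR P n (fun ω => l * X ω) = l * MINVAR P n X) ∧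
    (∀ X Y : Ω → ℝ, Measurable X → Measurable Y → BddRV X → BddRV Y →
        MINVAR P n (fun ω => X ω + Y ω) ≤ MINVAR P n X + MINVAR P n Y) ∧
    (∀ X Y : Ω → ℝ, Measurable X → Measurable Y → BddRV X → BddRV Y →
        Comonotonic X Y →
        MINVAR P n (fun ω => X ω + Y ω) = MINVAR P n X + MINVAR P n Y) := by
  haveI hne : Nonempty (Fin n) := Fin.pos_iff_nonempty.mp hn
  refine ⟨?_, ?_, ?_, ?_, ?_, ?_, ?_⟩
  · -- Choquet representation
    rintro X hX ⟨M, hbM⟩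
    have hb' : ∀ ω, |X ω| ≤ max M 0 := fun ω => (hbM ω).trans (le_max_left _ _)
    have hbZ : ∀ ω : Fin n → Ω, |⨆ i : Fin n, X (ω i)| ≤ max M 0 := fun ω =>
      sup_abs_bound _ _ (fun i => hb' (ω i))
    have hlc := layercake_bdd (Measure.pi fun _ : Fin n => P)
      (fun ω => ⨆ i : Fin n, X (ω i)) (meas_sup hX) (max M 0) (le_max_right _ _) hbZ
    rw [MINVAR, hlc, choquet]
    congr 1
    · refine integral_congr_ae (ae_of_all _ fun t => ?_)
      show ((Measure.pi fun _ : Fin n => P) {ω | t < ⨆ i : Fin n, X (ω i)}).toReal - 1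
        = 1 - (1 - (P {ω | t < X ω}).toReal) ^ n - 1
      rw [tail_sup hn P hX t]
    · refine integral_congr_ae (ae_of_all _ fun t => ?_)
      show ((Measure.pi fun _ : Fin n => P) {ω | t < ⨆ i : Fin n, X (ω i)}).toReal
        = 1 - (1 - (P {ω | t < X ω}).toReal) ^ n
      rw [tail_sup hn P hX t]
  · -- submodularity
    intro A B hA hB
    have hsum : (P (A ∪ B)).toReal + (P (A ∩ B)).toReal = (P A).toReal + (P B).toReal := by
      have h := measure_union_add_inter (μ := P) A hB
      have h2 := congrArg ENNReal.toReal h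
      rwa [ENNReal.toReal_add (measure_ne_top _ _) (measure_ne_top _ _),
        ENNReal.toReal_add (measure_ne_top _ _) (measure_ne_top _ _)] at h2
    have hv1 : (P (A ∪ B)).toReal ≤ 1 := by
      have := ENNReal.toReal_mono ENNReal.one_ne_top (prob_le_one (μ := P) (s := A ∪ B))
      simpa using this
    have hpv : (P A).toReal ≤ (P (A ∪ B)).toReal :=
      ENNReal.toReal_mono (measure_ne_top _ _) (measure_mono subset_union_left)
    have hup : (P (A ∩ B)).toReal ≤ (P A).toReal :=
      ENNReal.toReal_mono (measure_ne_top _ _) (measure_mono inter_subset_left)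
    have key := convex_ineq (n := n) (x := 1 - (P (A ∪ B)).toReal)
      (y := 1 - (P (A ∩ B)).toReal) (s := 1 - (P A).toReal) (t := 1 - (P B).toReal)
      (by linarith) (by linarith) (by linarith) (by linarith)
    linarith
  · -- translation invariance
    rintro X hX ⟨M, hbM⟩ c
    have hb' : ∀ ω, |X ω| ≤ max M 0 := fun ω => (hbM ω).trans (le_max_left _ _)
    have hpt : ∀ ω : Fin n → Ω, (⨆ i : Fin n, (X (ω i) + c)) = (⨆ i : Fin n, X (ω i)) + c := by
      intro ω
      obtain ⟨i0, h0⟩ := Finite.exists_max (fun i : Fin n => X (ω i))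
      rw [ciSup_of_max (fun i : Fin n => X (ω i) + c) (fun j => by
        have := h0 j; show X (ω j) + c ≤ X (ω i0) + c; linarith), ciSup_of_max _ h0]
    have e1 : MINVAR P n (fun ω => X ω + c)
        = ∫ ω, ((⨆ i : Fin n, X (ω i)) + c) ∂(Measure.pi fun _ : Fin n => P) := by
      rw [MINVAR]
      exact integral_congr_ae (ae_of_all _ fun ω => hpt ω)
    rw [e1, integral_add (integrable_sup hX hb' _) (integrable_const c),
      MeasureTheory.integral_const, MINVAR]
    simp
  · -- monotonicity
    rintro X Y hX hY ⟨MX, hbX⟩ ⟨MY, hbY⟩ hle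
    have hbX' : ∀ ω, |X ω| ≤ max MX 0 := fun ω => (hbX ω).trans (le_max_left _ _)
    have hbY' : ∀ ω, |Y ω| ≤ max MY 0 := fun ω => (hbY ω).trans (le_max_left _ _)
    rw [MINVAR, MINVAR]
    refine integral_mono (integrable_sup hX hbX' _) (integrable_sup hY hbY' _) fun ω => ?_
    exact ciSup_le fun i => (hle (ω i)).trans
      (le_ciSup (f := fun j : Fin n => Y (ω j)) (Set.finite_range _).bddAbove i)
  · -- positive homogeneity
    rintro X hX ⟨M, hbM⟩ l hl
    have hb' : ∀ ω, |X ω| ≤ max M 0 := fun ω => (hbM ω).trans (le_max_left _ _)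
    have hpt : ∀ ω : Fin n → Ω, (⨆ i : Fin n, l * X (ω i)) = l * ⨆ i : Fin n, X (ω i) := by
      intro ω
      obtain ⟨i0, h0⟩ := Finite.exists_max (fun i : Fin n => X (ω i))
      rw [ciSup_of_max (fun i : Fin n => l * X (ω i)) (fun j =>
        mul_le_mul_of_nonneg_left (h0 j) hl.le), ciSup_of_max _ h0]
    have e1 : MINVAR P n (fun ω => l * X ω)
        = ∫ ω, (l * ⨆ i : Fin n, X (ω i)) ∂(Measure.pi fun _ : Fin n => P) := by
      rw [MINVAR]
      exact integral_congr_ae (ae_of_all _ fun ω => hpt ω)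
    rw [e1, MeasureTheory.integral_const_mul, MINVAR]
  · -- subadditivity
    rintro X Y hX hY ⟨MX, hbX⟩ ⟨MY, hbY⟩
    have hbX' : ∀ ω, |X ω| ≤ max MX 0 := fun ω => (hbX ω).trans (le_max_left _ _)
    have hbY' : ∀ ω, |Y ω| ≤ max MY 0 := fun ω => (hbY ω).trans (le_max_left _ _)
    have hbS : ∀ ω, |X ω + Y ω| ≤ max MX 0 + max MY 0 := fun ω =>
      (abs_add_le _ _).trans (add_le_add (hbX' ω) (hbY' ω))
    rw [MINVAR, MINVAR, MINVAR, ← integral_add (integrable_sup hX hbX' _)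
      (integrable_sup hY hbY' _)]
    refine integral_mono (integrable_sup (hX.add hY) hbS _)
      ((integrable_sup hX hbX' _).add (integrable_sup hY hbY' _)) fun ω => ?_
    refine ciSup_le fun i => add_le_add
      (le_ciSup (f := fun j : Fin n => X (ω j)) (Set.finite_range _).bddAbove i)
      (le_ciSup (f := fun j : Fin n => Y (ω j)) (Set.finite_range _).bddAbove i)
  · -- comonotonic additivity
    rintro X Y hX hY ⟨MX, hbX⟩ ⟨MY, hbY⟩ hco
    have hbX' : ∀ ω, |X ω| ≤ max MX 0 := fun ω => (hbX ω).trans (le_max_left _ _)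
    have hbY' : ∀ ω, |Y ω| ≤ max MY 0 := fun ω => (hbY ω).trans (le_max_left _ _)
    have hpt : ∀ ω : Fin n → Ω, (⨆ i : Fin n, (X (ω i) + Y (ω i)))
        = (⨆ i : Fin n, X (ω i)) + ⨆ i : Fin n, Y (ω i) := by
      intro ω
      obtain ⟨i0, h0⟩ := Finite.exists_max (fun i : Fin n => X (ω i) + Y (ω i))
      have hmx : ∀ j, X (ω j) ≤ X (ω i0) := by
        intro j
        by_contra hc
        push_neg at hc
        have hcm := hco (ω j) (ω i0)
        have hy : Y (ω i0) ≤ Y (ω j) := by nlinarith [hcm, hc]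
        have := h0 j
        linarith
      have hmy : ∀ j, Y (ω j) ≤ Y (ω i0) := by
        intro j
        by_contra hc
        push_neg at hc
        have hcm := hco (ω j) (ω i0)
        have hx2 : X (ω i0) ≤ X (ω j) := by nlinarith [hcm, hc]
        have := h0 j
        linarith
      rw [ciSup_of_max (fun i : Fin n => X (ω i) + Y (ω i)) h0,
        ciSup_of_max _ hmx, ciSup_of_max _ hmy]
    have e1 : MINVAR P n (fun ω => X ω + Y ω)
        = ∫ ω, ((⨆ i : Fin n, X (ω i)) + ⨆ i : Fin n, Y (ω i))
            ∂(Measure.pi fun _ : Fin n => P) := by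
      rw [MINVAR]
      exact integral_congr_ae (ae_of_all _ fun ω => hpt ω)
    rw [e1, integral_add (integrable_sup hX hbX' _) (integrable_sup hY hbY' _),
      MINVAR, MINVAR]
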